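/- Let k be a field containing an element ζ, and let λ_ζ : T(V) → T(V) be the Hopf algebra map with λ_ζ(a) = ζ a for a ∈ V, χ : T(V) → T(V) the antipode (the anti-automorphism with χ(a) = −a for a ∈ V, so χ(a_1⋯a_n) = (−1)^n a_n⋯a_1), and θ_ζ = λ_ζ ∗ χ the convolution product, i.e., θ_ζ is the composite T(V) → T(V)⊗T(V) → T(V) of the comultiplication ψ, λ_ζ ⊗ χ, and multiplication. Then θ_ζ is a coalgebra map, and for every primitive element α ∈ T(V) of tensor length n, θ_ζ(α) = (ζ^n − 1) α. -/
import Mathlib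


open TensorProduct

section
variable (k : Type) [Field k] (V : Type) [AddCommGroup V] [Module k V]

/-- The comultiplication `ψ` on `T(V)` making `V` primitive. -/
noncomputable def psi : TensorAlgebra k V →ₐ[k] TensorAlgebra k V ⊗[k] TensorAlgebra k V :=
  TensorAlgebra.lift k
    ((Algebra.TensorProduct.includeLeft :
        TensorAlgebra k V →ₐ[k] TensorAlgebra k V ⊗[k] TensorAlgebra k V).toLinearMap.comp
        (TensorAlgebra.ι k) +
      (Algebra.TensorProduct.includeRight :
        TensorAlgebra k V →ₐ[k] TensorAlgebra k V ⊗[k] TensorAlgebra k V).toLinearMap.comp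
        (TensorAlgebra.ι k))

/-- The Hopf algebra map `λ_ζ : T(V) → T(V)` with `λ_ζ(a) = ζ a` for `a ∈ V`. -/
noncomputable def lamZ (ζ : k) : TensorAlgebra k V →ₐ[k] TensorAlgebra k V :=
  TensorAlgebra.lift k (ζ • TensorAlgebra.ι k)

/-- The antipode `χ : T(V) → T(V)`: the anti-automorphism with `χ(a) = -a` for `a ∈ V`
(so `χ(a_1 ⋯ a_n) = (-1)^n a_n ⋯ a_1`), obtained from the algebra map into the opposite
algebra. -/
noncomputable def chi : TensorAlgebra k V →ₗ[k] TensorAlgebra k V :=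
  (MulOpposite.opLinearEquiv k).symm.toLinearMap.comp
    (TensorAlgebra.lift k
      ((MulOpposite.opLinearEquiv k).toLinearMap.comp
        (-(TensorAlgebra.ι k : V →ₗ[k] TensorAlgebra k V)))).toLinearMap

/-- The convolution `θ_ζ = λ_ζ ∗ χ = mult ∘ (λ_ζ ⊗ χ) ∘ ψ`. -/
noncomputable def thetaZ (ζ : k) : TensorAlgebra k V →ₗ[k] TensorAlgebra k V :=
  (LinearMap.mul' k (TensorAlgebra k V)).comp
    ((TensorProduct.map (lamZ k V ζ).toLinearMap (chi k V)).comp (psi k V).toLinearMap)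

/-- The degree-`n` homogeneous component `T_n(V)` of `T(V)`. -/
noncomputable def Tpiece (n : ℕ) : Submodule k (TensorAlgebra k V) :=
  LinearMap.range (TensorAlgebra.ι k : V →ₗ[k] TensorAlgebra k V) ^ n

end

section Aux
variable {k : Type} [Field k] {V : Type} [AddCommGroup V] [Module k V]

lemma psi_ι (a : V) : psi k V (TensorAlgebra.ι k a)
    = TensorAlgebra.ι k a ⊗ₜ[k] 1 + 1 ⊗ₜ[k] TensorAlgebra.ι k a := by
  simp [psi, TensorAlgebra.lift_ι_apply, Algebra.TensorProduct.includeRight_apply,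
    Algebra.TensorProduct.includeLeft_apply]

lemma lamZ_ι (ζ : k) (a : V) : lamZ k V ζ (TensorAlgebra.ι k a) = ζ • TensorAlgebra.ι k a := by
  simp [lamZ, TensorAlgebra.lift_ι_apply]

lemma chi_ι (a : V) : chi k V (TensorAlgebra.ι k a) = -TensorAlgebra.ι k a := by
  simp [chi, TensorAlgebra.lift_ι_apply]

lemma chi_one : chi k V 1 = 1 := by
  simp [chi]

lemma chi_mul (x y : TensorAlgebra k V) : chi k V (x * y) = chi k V y * chi k V x := by
  simp [chi, map_mul]

end Aux

section Aux2
variable {k : Type} [Field k] {V : Type} [AddCommGroup V] [Module k V]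

/-- Key recursion: θ_ζ(a·x) = ζ•(a·θx) − θx·a. -/
lemma thetaZ_ι_mul (ζ : k) (a : V) (x : TensorAlgebra k V) :
    thetaZ k V ζ (TensorAlgebra.ι k a * x)
      = ζ • (TensorAlgebra.ι k a * thetaZ k V ζ x) - thetaZ k V ζ x * TensorAlgebra.ι k a := by
  set f : TensorAlgebra k V ⊗[k] TensorAlgebra k V →ₗ[k] TensorAlgebra k V :=
    (LinearMap.mul' k (TensorAlgebra k V)).comp
      (TensorProduct.map (lamZ k V ζ).toLinearMap (chi k V)) with hf
  have key : ∀ t : TensorAlgebra k V ⊗[k] TensorAlgebra k V,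
      f ((TensorAlgebra.ι k a ⊗ₜ[k] 1 + 1 ⊗ₜ[k] TensorAlgebra.ι k a) * t)
        = ζ • (TensorAlgebra.ι k a * f t) - f t * TensorAlgebra.ι k a := by
    intro t
    induction t using TensorProduct.induction_on with
    | zero => simp
    | tmul x y =>
        simp only [hf, add_mul, Algebra.TensorProduct.tmul_mul_tmul, one_mul, mul_one, map_add,
          LinearMap.comp_apply, TensorProduct.map_tmul, LinearMap.mul'_apply, map_mul,
          AlgHom.toLinearMap_apply, lamZ_ι, chi_mul, chi_ι]
        rw [smul_mul_assoc, mul_assoc]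
        simp only [mul_neg, sub_eq_add_neg, mul_assoc, smul_mul_assoc]
    | add u v hu hv =>
        rw [mul_add, map_add, hu, hv, map_add, mul_add, smul_add, add_mul]
        abel
  have : thetaZ k V ζ (TensorAlgebra.ι k a * x) = f (psi k V (TensorAlgebra.ι k a * x)) := rfl
  rw [this, map_mul, psi_ι, key]
  rfl

lemma thetaZ_one (ζ : k) : thetaZ k V ζ 1 = 1 := by
  simp [thetaZ, chi_one, Algebra.TensorProduct.one_def]

/-- Induction principle: a submodule containing 1 and stable under left multiplication by
generators is everything. -/
lemma leftmul_induction (P : Submodule k (TensorAlgebra k V)) (h1 : (1 : TensorAlgebra k V) ∈ P)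
    (hι : ∀ (a : V) (x : TensorAlgebra k V), x ∈ P → TensorAlgebra.ι k a * x ∈ P)
    (x : TensorAlgebra k V) : x ∈ P := by
  have main : ∀ x : TensorAlgebra k V, ∀ y ∈ P, x * y ∈ P := by
    intro x
    induction x using TensorAlgebra.induction with
    | algebraMap r => intro y hy; rw [Algebra.algebraMap_eq_smul_one, smul_mul_assoc, one_mul]
                      exact P.smul_mem r hy
    | ι a => intro y hy; exact hι a y hy
    | mul x₁ x₂ h₁ h₂ => intro y hy; rw [mul_assoc]; exact h₁ _ (h₂ y hy)
    | add x₁ x₂ h₁ h₂ => intro y hy; rw [add_mul]; exact P.add_mem (h₁ y hy) (h₂ y hy)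
  simpa using main x 1 h1

end Aux2

section Aux3
variable {k : Type} [Field k] {V : Type} [AddCommGroup V] [Module k V]

lemma map_theta_theta_key (ζ : k) (a : V)
    (t : TensorAlgebra k V ⊗[k] TensorAlgebra k V) :
    TensorProduct.map (thetaZ k V ζ) (thetaZ k V ζ)
        ((TensorAlgebra.ι k a ⊗ₜ[k] 1 + 1 ⊗ₜ[k] TensorAlgebra.ι k a) * t)
      = ζ • ((TensorAlgebra.ι k a ⊗ₜ[k] 1 + 1 ⊗ₜ[k] TensorAlgebra.ι k a) *
            TensorProduct.map (thetaZ k V ζ) (thetaZ k V ζ) t)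
        - TensorProduct.map (thetaZ k V ζ) (thetaZ k V ζ) t *
            (TensorAlgebra.ι k a ⊗ₜ[k] 1 + 1 ⊗ₜ[k] TensorAlgebra.ι k a) := by
  induction t using TensorProduct.induction_on with
  | zero => simp
  | tmul x y =>
      simp only [add_mul, mul_add, Algebra.TensorProduct.tmul_mul_tmul, one_mul, mul_one,
        map_add, TensorProduct.map_tmul, thetaZ_ι_mul, TensorProduct.sub_tmul,
        TensorProduct.tmul_sub, TensorProduct.smul_tmul', TensorProduct.tmul_smul, smul_add]
      abel
  | add u v hu hv =>
      rw [mul_add, map_add, hu, hv, map_add]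
      simp only [mul_add, add_mul, smul_add]
      abel

lemma psi_theta_comm (ζ : k) :
    (psi k V).toLinearMap.comp (thetaZ k V ζ)
      = (TensorProduct.map (thetaZ k V ζ) (thetaZ k V ζ)).comp (psi k V).toLinearMap := by
  apply LinearMap.ext
  intro x
  have : x ∈ LinearMap.eqLocus ((psi k V).toLinearMap.comp (thetaZ k V ζ))
      ((TensorProduct.map (thetaZ k V ζ) (thetaZ k V ζ)).comp (psi k V).toLinearMap) := by
    apply leftmul_induction
    · show psi k V (thetaZ k V ζ 1) = _
      simp [thetaZ_one, Algebra.TensorProduct.one_def]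
    · intro a x hx
      have hx' : psi k V (thetaZ k V ζ x)
          = TensorProduct.map (thetaZ k V ζ) (thetaZ k V ζ) (psi k V x) := hx
      show psi k V (thetaZ k V ζ (TensorAlgebra.ι k a * x)) = _
      rw [thetaZ_ι_mul, map_sub, map_smul, map_mul, map_mul, psi_ι, hx']
      show _ = TensorProduct.map (thetaZ k V ζ) (thetaZ k V ζ) (psi k V (TensorAlgebra.ι k a * x))
      rw [map_mul, psi_ι, map_theta_theta_key]
  exact this

lemma counit_theta (ζ : k) :
    (TensorAlgebra.algebraMapInv :
        TensorAlgebra k V →ₐ[k] k).toLinearMap.comp (thetaZ k V ζ)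
      = (TensorAlgebra.algebraMapInv : TensorAlgebra k V →ₐ[k] k).toLinearMap := by
  apply LinearMap.ext
  intro x
  have : x ∈ LinearMap.eqLocus
      ((TensorAlgebra.algebraMapInv : TensorAlgebra k V →ₐ[k] k).toLinearMap.comp (thetaZ k V ζ))
      (TensorAlgebra.algebraMapInv : TensorAlgebra k V →ₐ[k] k).toLinearMap := by
    apply leftmul_induction
    · show TensorAlgebra.algebraMapInv (thetaZ k V ζ 1) = _
      simp [thetaZ_one]
    · intro a x hx
      have hx' : TensorAlgebra.algebraMapInv (thetaZ k V ζ x)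
          = TensorAlgebra.algebraMapInv x := hx
      show TensorAlgebra.algebraMapInv (thetaZ k V ζ (TensorAlgebra.ι k a * x)) = _
      rw [thetaZ_ι_mul, map_sub, map_smul, map_mul, map_mul]
      have hι0 : TensorAlgebra.algebraMapInv (TensorAlgebra.ι k a) = (0 : k) := by
        simp [TensorAlgebra.algebraMapInv, TensorAlgebra.lift_ι_apply]
      simp [hι0]
  exact this

end Aux3

section Aux4
variable {k : Type} [Field k] {V : Type} [AddCommGroup V] [Module k V]

lemma lamZ_one_eq : lamZ k V (1 : k) = AlgHom.id k (TensorAlgebra k V) := by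
  apply TensorAlgebra.hom_ext
  apply LinearMap.ext
  intro a
  simp [lamZ, TensorAlgebra.lift_ι_apply]

/-- Antipode axiom: `id ∗ χ = unit ∘ counit`, phrased as `θ_1 = η ∘ ε`. -/
lemma thetaZ_one_antipode :
    thetaZ k V (1 : k)
      = (Algebra.linearMap k (TensorAlgebra k V)).comp
          (TensorAlgebra.algebraMapInv : TensorAlgebra k V →ₐ[k] k).toLinearMap := by
  apply LinearMap.ext
  intro x
  have : x ∈ LinearMap.eqLocus (thetaZ k V (1 : k))
      ((Algebra.linearMap k (TensorAlgebra k V)).comp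
        (TensorAlgebra.algebraMapInv : TensorAlgebra k V →ₐ[k] k).toLinearMap) := by
    apply leftmul_induction
    · show thetaZ k V 1 1 = _
      simp [thetaZ_one]
    · intro a x hx
      have hx' : thetaZ k V (1 : k) x
          = algebraMap k (TensorAlgebra k V) (TensorAlgebra.algebraMapInv x) := hx
      show thetaZ k V 1 (TensorAlgebra.ι k a * x) = _
      rw [thetaZ_ι_mul, hx', one_smul]
      have hι0 : TensorAlgebra.algebraMapInv (TensorAlgebra.ι k a * x) = (0 : k) := by
        simp [map_mul, TensorAlgebra.algebraMapInv, TensorAlgebra.lift_ι_apply]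
      show _ = algebraMap k (TensorAlgebra k V) (TensorAlgebra.algebraMapInv
        (TensorAlgebra.ι k a * x))
      rw [hι0, map_zero, Algebra.commutes, sub_self]
  exact this

/-- Primitive elements have counit zero. -/
lemma eps_primitive (α : TensorAlgebra k V)
    (hα : psi k V α = α ⊗ₜ[k] 1 + 1 ⊗ₜ[k] α) :
    TensorAlgebra.algebraMapInv α = (0 : k) := by
  set F : TensorAlgebra k V →ₐ[k] k :=
    ((Algebra.TensorProduct.lmul' k).comp
      (Algebra.TensorProduct.map TensorAlgebra.algebraMapInv TensorAlgebra.algebraMapInv)).comp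
      (psi k V) with hF
  have hFε : F = (TensorAlgebra.algebraMapInv : TensorAlgebra k V →ₐ[k] k) := by
    apply TensorAlgebra.hom_ext
    apply LinearMap.ext
    intro a
    simp [hF, psi_ι, TensorAlgebra.algebraMapInv, TensorAlgebra.lift_ι_apply]
  have h1 : F α = 2 * TensorAlgebra.algebraMapInv α := by
    simp [hF, hα, TensorAlgebra.algebraMapInv]
    ring
  rw [hFε] at h1
  linear_combination -h1

/-- On primitive α: χ(α) = η(ε α) − α. -/
lemma chi_primitive (α : TensorAlgebra k V)
    (hα : psi k V α = α ⊗ₜ[k] 1 + 1 ⊗ₜ[k] α) :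
    chi k V α = -α := by
  have h := congrFun (congrArg DFunLike.coe (thetaZ_one_antipode (k := k) (V := V))) α
  have hθ : thetaZ k V (1 : k) α = α + chi k V α := by
    show (LinearMap.mul' k (TensorAlgebra k V))
      (TensorProduct.map (lamZ k V 1).toLinearMap (chi k V) (psi k V α)) = _
    rw [hα, map_add, TensorProduct.map_tmul, TensorProduct.map_tmul]
    simp [lamZ_one_eq, chi_one]
  rw [hθ] at h
  simp only [LinearMap.comp_apply, AlgHom.toLinearMap_apply, Algebra.linearMap_apply,
    eps_primitive α hα, map_zero] at h
  exact eq_neg_of_add_eq_zero_right h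

/-- `λ_ζ` acts by `ζ^n` on the degree-`n` piece. -/
lemma lamZ_Tpiece (ζ : k) (n : ℕ) (α : TensorAlgebra k V) (hα : α ∈ Tpiece k V n) :
    lamZ k V ζ α = ζ ^ n • α := by
  unfold Tpiece at hα
  induction hα using Submodule.pow_induction_on_left' with
  | algebraMap r => simp [AlgHom.commutes]
  | add x y i hx hy ihx ihy => rw [map_add, ihx, ihy, smul_add]
  | mem_mul m hm i x hx ih =>
      obtain ⟨a, rfl⟩ := hm
      rw [map_mul, lamZ_ι, ih, smul_mul_assoc, mul_smul_comm, smul_smul, pow_succ']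

end Aux4

/-- `θ_ζ = λ_ζ ∗ χ` is a coalgebra map, and on a primitive element `α` of tensor length `n` it
acts by `θ_ζ(α) = (ζ^n - 1) α`. -/
theorem stmt14 (k : Type) [Field k] (V : Type) [AddCommGroup V] [Module k V] (ζ : k) :
    -- λ_ζ scales V by ζ
    (∀ a : V, lamZ k V ζ (TensorAlgebra.ι k a) = ζ • TensorAlgebra.ι k a) ∧
    -- χ negates V
    (∀ a : V, chi k V (TensorAlgebra.ι k a) = -TensorAlgebra.ι k a) ∧
    -- θ_ζ is a coalgebra map
    ((psi k V).toLinearMap.comp (thetaZ k V ζ)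
      = (TensorProduct.map (thetaZ k V ζ) (thetaZ k V ζ)).comp (psi k V).toLinearMap) ∧
    ((TensorAlgebra.algebraMapInv :
        TensorAlgebra k V →ₐ[k] k).toLinearMap.comp (thetaZ k V ζ)
      = (TensorAlgebra.algebraMapInv : TensorAlgebra k V →ₐ[k] k).toLinearMap) ∧
    -- action on primitives of tensor length n
    (∀ (n : ℕ) (α : TensorAlgebra k V), α ∈ Tpiece k V n →
      psi k V α = α ⊗ₜ[k] 1 + 1 ⊗ₜ[k] α →
      thetaZ k V ζ α = (ζ ^ n - 1) • α) := by
  refine ⟨fun a => lamZ_ι ζ a, fun a => chi_ι a, psi_theta_comm ζ, counit_theta ζ, ?_⟩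
  intro n α hmem hprim
  have hθ : thetaZ k V ζ α = lamZ k V ζ α + chi k V α := by
    show (LinearMap.mul' k (TensorAlgebra k V))
      (TensorProduct.map (lamZ k V ζ).toLinearMap (chi k V) (psi k V α)) = _
    rw [hprim, map_add, TensorProduct.map_tmul, TensorProduct.map_tmul]
    simp [chi_one]
  rw [hθ, lamZ_Tpiece ζ n α hmem, chi_primitive α hprim, sub_smul, one_smul, sub_eq_add_neg]
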